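/- arXiv:0812.2687 — 2 statements merged into one kernel-verified Lean document; each statement's English description precedes it below -/
import Mathlib

section
/- Let f be the formal power series over ℚ given by f = Σ_{k≥0} X^{2k+1} (equivalently f·(1 − X²) = X), and let u be the compositional inverse of f (the unique power series with zero constant term and f(u(X)) = X). Then for every k ≥ 0, the coefficient of X^{2k+1} in u equals (−1)ᵏ · Catalan(k), and all even-degree coefficients of u are 0. In particular u = X − X³ + 2X⁵ − 5X⁷ + 14X⁹ − ⋯. -/
open PowerSeries Finset

/-- Composition `f ∘ u` of formal power series (intended for `u` with zero
constant coefficient). -/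
noncomputable def PowerSeries.compose (f u : PowerSeries ℚ) : PowerSeries ℚ :=
  PowerSeries.mk fun n =>
    PowerSeries.coeff n (Polynomial.aeval u (PowerSeries.trunc (n + 1) f))



lemma aux_coeff_pow (u : PowerSeries ℚ) (hu0 : constantCoeff u = 0) {b i : ℕ} (h : b < i) :
    coeff b (u ^ i) = 0 := by
  have hd : (X : PowerSeries ℚ) ^ i ∣ u ^ i :=
    pow_dvd_pow_of_dvd (X_dvd_iff.mpr hu0) i
  exact (X_pow_dvd_iff.mp hd) b h

lemma coeff_compose (f u : PowerSeries ℚ) (n : ℕ) :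
    coeff n (f.compose u) = ∑ i ∈ range (n+1), coeff i f * coeff n (u ^ i) := by
  simp only [PowerSeries.compose, coeff_mk]
  rw [Polynomial.aeval_def, eval₂_trunc_eq_sum_range, map_sum]
  refine Finset.sum_congr rfl fun i _ => ?_
  have : algebraMap ℚ (PowerSeries ℚ) (coeff i f) = C (coeff i f) := rfl
  rw [this, coeff_C_mul]

lemma compose_eq (f u : PowerSeries ℚ) (hf : f * (1 - X ^ 2) = X)
    (hu0 : constantCoeff u = 0) :
    f.compose u = u + u ^ 2 * f.compose u := by
  have hfe : f = X + f * X ^ 2 := by linear_combination hf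
  ext n
  -- RHS second summand
  have key : coeff n (u ^ 2 * f.compose u)
      = ∑ i ∈ range (n+1), coeff i f * coeff n (u ^ 2 * u ^ i) := by
    rw [coeff_mul]
    have step1 : ∀ pq ∈ antidiagonal n,
        coeff pq.1 (u^2) * coeff pq.2 (f.compose u)
        = ∑ i ∈ range (n+1), coeff pq.1 (u^2) * (coeff i f * coeff pq.2 (u^i)) := by
      intro pq hpq
      rw [coeff_compose, Finset.mul_sum]
      have hle : pq.2 ≤ n := Finset.HasAntidiagonal.antidiagonal.snd_le hpq
      refine Finset.sum_subset (Finset.range_subset_range.mpr (by omega)) ?_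
      intro i hi hni
      rw [Finset.mem_range] at hi hni
      rw [aux_coeff_pow u hu0 (show pq.2 < i by omega)]
      ring
    rw [Finset.sum_congr rfl step1, Finset.sum_comm]
    refine Finset.sum_congr rfl fun i _ => ?_
    rw [coeff_mul, Finset.mul_sum]
    refine Finset.sum_congr rfl fun pq _ => ?_
    ring
  rw [map_add, key, coeff_compose]
  -- split coeff i f using hfe
  have hsplit : ∀ i, coeff i f
      = (coeff i X) + (if 2 ≤ i then coeff (i-2) f else 0) := by
    intro i
    conv_lhs => rw [hfe]
    rw [map_add, coeff_mul_X_pow']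
  have hsum : ∑ i ∈ range (n+1), coeff i f * coeff n (u ^ i)
      = ∑ i ∈ range (n+1), (coeff i X * coeff n (u ^ i)
        + (if 2 ≤ i then coeff (i-2) f else 0) * coeff n (u ^ i)) := by
    refine Finset.sum_congr rfl fun i _ => ?_
    rw [hsplit i]; ring
  rw [hsum, Finset.sum_add_distrib]
  congr 1
  · -- ∑ coeff i X * coeff n u^i = coeff n u
    rcases Nat.eq_zero_or_pos n with hn | hn
    · subst hn
      rw [Finset.sum_range_one, coeff_X, if_neg (by norm_num), zero_mul,
        coeff_zero_eq_constantCoeff_apply, hu0]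
    · rw [Finset.sum_eq_single 1]
      · simp
      · intro i _ hi1
        rw [coeff_X, if_neg hi1, zero_mul]
      · intro h
        exact absurd (Finset.mem_range.mpr (by omega)) h
  · -- shifted sum
    set G : ℕ → ℚ := fun i => (if 2 ≤ i then coeff (i-2) f else 0) * coeff n (u ^ i) with hG
    have hGn1 : G (n+1) = 0 := by simp [hG, aux_coeff_pow u hu0 (Nat.lt_succ_self n)]
    have hGn2 : G (n+2) = 0 := by simp [hG, aux_coeff_pow u hu0 (by omega : n < n+2)]
    have e1 : ∑ i ∈ range (n+3), G i = ∑ i ∈ range (n+1), G i := by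
      rw [show n+3 = (n+2)+1 from rfl, Finset.sum_range_succ, Finset.sum_range_succ, hGn1,
        hGn2]
      ring
    rw [← e1, Finset.sum_range_succ' G, Finset.sum_range_succ' (fun i => G (i+1))]
    have hG0 : G 0 = 0 := by simp [hG]
    have hG1 : G 1 = 0 := by simp [hG]
    rw [hG0, hG1]
    simp only [add_zero]
    refine Finset.sum_congr rfl fun j _ => ?_
    have : j + 1 + 1 = j + 2 := rfl
    rw [this]
    simp only [hG, if_pos (by omega : 2 ≤ j + 2), Nat.add_sub_cancel]
    rw [show u^2 * u^j = u^(j+2) by ring]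


lemma sum_odd_support (g : ℕ → ℚ) : ∀ k : ℕ, (∀ i ≤ k, g (2*i) = 0) →
    ∑ a ∈ range (2*k+1), g a = ∑ i ∈ range k, g (2*i+1) := by
  intro k
  induction k with
  | zero => intro h; simpa using h 0 (le_refl 0)
  | succ k ih =>
    intro h
    rw [show 2*(k+1)+1 = (2*k+1)+1+1 by ring, Finset.sum_range_succ, Finset.sum_range_succ,
      ih (fun i hi => h i (by omega)), Finset.sum_range_succ]
    rw [show 2*k+1+1 = 2*(k+1) by ring, h (k+1) le_rfl]
    ring

lemma coeff_u (u : PowerSeries ℚ) (hu : u = X - u^2 * X) :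
    ∀ n : ℕ, coeff n u = if Even n then 0 else (-1:ℚ)^(n/2) * catalan (n/2) := by
  intro n
  induction n using Nat.strong_induction_on with
  | _ n IH =>
  have hrec : ∀ m : ℕ, coeff m u
      = (if m = 1 then (1:ℚ) else 0) - (if 1 ≤ m then coeff (m-1) (u^2) else 0) := by
    intro m
    conv_lhs => rw [hu]
    rw [map_sub, coeff_X, show u^2 * X = u^2 * X^1 by rw [pow_one], coeff_mul_X_pow']
  match n, IH with
  | 0, _ =>
    rw [hrec 0]
    norm_num
  | 1, IH =>
    rw [hrec 1]
    have h0 : coeff 0 u = 0 := by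
      rw [IH 0 (by norm_num)]; norm_num
    rw [if_pos rfl, if_pos le_rfl]
    rw [show (1:ℕ) - 1 = 0 from rfl, sq, coeff_zero_eq_constantCoeff_apply, map_mul,
      ← coeff_zero_eq_constantCoeff_apply, h0]
    norm_num
  | (m+2), IH =>
    have hm : coeff (m+1) (u^2)
        = ∑ a ∈ range (m+2), coeff a u * coeff (m+1-a) u := by
      rw [sq, coeff_mul, Finset.Nat.sum_antidiagonal_eq_sum_range_succ_mk]
    rw [hrec (m+2), if_neg (by omega), if_pos (by omega), show m+2-1 = m+1 from rfl, hm]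
    rcases Nat.even_or_odd (m+2) with he | ho
    · -- n even : every term vanishes
      rw [if_pos he]
      have : ∀ a ∈ range (m+2), coeff a u * coeff (m+1-a) u = 0 := by
        intro a ha
        rw [Finset.mem_range] at ha
        rcases Nat.even_or_odd a with hea | hoa
        · rw [IH a (by omega), if_pos hea, zero_mul]
        · have hev : Even (m+1-a) := by
            rw [Nat.even_iff] at he ⊢
            rw [Nat.odd_iff] at hoa
            omega
          rw [IH (m+1-a) (by omega), if_pos hev, mul_zero]
      rw [Finset.sum_eq_zero this]
      ring
    · -- n odd : n = 2k+1 with k = (m+2)/2 ≥ 1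
      obtain ⟨k, hk⟩ := ho   -- m + 2 = 2*k + 1
      have hk1 : 1 ≤ k := by omega
      rw [if_neg (by simp [Nat.even_iff, Nat.odd_iff.mp ⟨k, hk⟩])]
      have hrange : m + 2 = 2*k + 1 := hk
      have hsum : ∑ a ∈ range (m+2), coeff a u * coeff (m+1-a) u
          = ∑ i ∈ range k, coeff (2*i+1) u * coeff (m+1-(2*i+1)) u := by
        rw [hrange]
        refine sum_odd_support _ k ?_
        intro i hi
        rcases Nat.lt_or_ge (2*i) (2*k+1) with h2 | h2
        · rw [IH (2*i) (by omega), if_pos ⟨i, by ring⟩, zero_mul]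
        · -- 2*i = 2*k impossible? i ≤ k so 2*i ≤ 2*k < 2*k+1, contradiction
          omega
      rw [hsum]
      have hterm : ∀ i ∈ range k, coeff (2*i+1) u * coeff (m+1-(2*i+1)) u
          = (-1:ℚ)^(k-1) * (catalan i * catalan (k-1-i)) := by
        intro i hi
        rw [Finset.mem_range] at hi
        have e1 : m+1-(2*i+1) = 2*(k-1-i)+1 := by omega
        rw [e1, IH (2*i+1) (by omega), IH (2*(k-1-i)+1) (by omega),
          if_neg (by simp [Nat.even_iff]), if_neg (by simp [Nat.even_iff]),
          show (2*i+1)/2 = i by omega, show (2*(k-1-i)+1)/2 = k-1-i by omega]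
        rw [show ((-1:ℚ)^i * catalan i) * ((-1:ℚ)^(k-1-i) * catalan (k-1-i))
            = ((-1:ℚ)^i * (-1:ℚ)^(k-1-i)) * (catalan i * catalan (k-1-i)) by ring,
          ← pow_add, show i + (k-1-i) = k-1 by omega]
      rw [Finset.sum_congr rfl hterm, ← Finset.mul_sum]
      have hnat : ∑ i ∈ range k, catalan i * catalan (k-1-i) = catalan k := by
        conv_rhs => rw [show k = (k-1)+1 by omega, catalan_succ (k-1)]
        rw [Fin.sum_univ_eq_sum_range (fun i => catalan i * catalan (k-1-i)) ((k-1)+1),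
          show (k-1)+1 = k by omega]
      have hcat : ∑ i ∈ range k, (catalan i : ℚ) * catalan (k-1-i) = catalan k := by
        rw [← hnat]
        push_cast
        ring
      rw [hcat, show (m+2)/2 = k by omega]
      have hpow : (-1:ℚ)^k = -(-1:ℚ)^(k-1) := by
        have h' : k - 1 + 1 = k := by omega
        calc (-1:ℚ)^k = (-1:ℚ)^(k-1+1) := by rw [h']
          _ = -(-1:ℚ)^(k-1) := by rw [pow_succ]; ring
      rw [hpow]
      ring

theorem stmt3 (f u : PowerSeries ℚ)
    (hf : f * (1 - X ^ 2) = X)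
    (hu0 : constantCoeff u = 0)
    (hinv : PowerSeries.compose f u = X)
    (huniq : ∀ u' : PowerSeries ℚ, constantCoeff u' = 0 →
      PowerSeries.compose f u' = X → u' = u) :
    (∀ k : ℕ, coeff (2 * k + 1) u = (-1 : ℚ) ^ k * catalan k) ∧
    (∀ k : ℕ, coeff (2 * k) u = 0) := by
  have hue : u = X - u ^ 2 * X := by
    have h := compose_eq f u hf hu0
    rw [hinv] at h
    linear_combination -h
  have Q := coeff_u u hue
  constructor
  · intro k
    rw [Q (2 * k + 1), if_neg (by rw [Nat.even_iff]; omega),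
      show (2 * k + 1) / 2 = k by omega]
  · intro k
    rw [Q (2 * k), if_pos ⟨k, by ring⟩]
end

section
/- Let f = Σ_{k≥0} X^{2k+1} ∈ ℚ⟦X⟧ and let u be its compositional inverse. Then the absolute value of the coefficient of X⁷ in u equals 5, which is different from 4. (Hence the sequence |coefficients of u| does not match the sequence 1, 1, 2, 4, 5, 6, 7, … of dimensions of homogeneous components of the free ternary partially associative algebra on one generator.) -/
open PowerSeries

theorem stmt4 (f u : PowerSeries ℚ)
    (hf : f * (1 - X ^ 2) = X)
    (hu0 : constantCoeff u = 0)
    (hinv : PowerSeries.compose f u = X) :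
    |coeff 7 u| = 5 ∧ (5 : ℚ) ≠ 4 := by
  have hf' : f = X + X ^ 2 * f := by linear_combination hf
  -- coefficients of f
  have key : ∀ n : ℕ, coeff (n + 2) f = coeff (n + 2) (X : ℚ⟦X⟧) + coeff n f := by
    intro n
    nth_rewrite 1 [hf']
    rw [map_add]
    congr 1
    rw [show X ^ 2 * f = X * (X * f) by ring, show n + 2 = n + 1 + 1 by ring,
      coeff_succ_X_mul, coeff_succ_X_mul]
  have cf0 : coeff 0 f = 0 := by nth_rewrite 1 [hf']; simp
  have cf1 : coeff 1 f = 1 := by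
    nth_rewrite 1 [hf']
    rw [map_add, show X ^ 2 * f = X * (X * f) by ring, show (1 : ℕ) = 0 + 1 by ring,
      coeff_succ_X_mul]
    simp
  have cf2 : coeff 2 f = 0 := by rw [show (2:ℕ) = 0+2 from rfl, key]; simp [cf0, coeff_X]
  have cf3 : coeff 3 f = 1 := by rw [show (3:ℕ) = 1+2 from rfl, key]; simp [cf1, coeff_X]
  have cf4 : coeff 4 f = 0 := by rw [show (4:ℕ) = 2+2 from rfl, key]; simp [cf2, coeff_X]
  have cf5 : coeff 5 f = 1 := by rw [show (5:ℕ) = 3+2 from rfl, key]; simp [cf3, coeff_X]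
  have cf6 : coeff 6 f = 0 := by rw [show (6:ℕ) = 4+2 from rfl, key]; simp [cf4, coeff_X]
  have cf7 : coeff 7 f = 1 := by rw [show (7:ℕ) = 5+2 from rfl, key]; simp [cf5, coeff_X]
  -- truncations
  have ts : ∀ n : ℕ, trunc (n + 1) f = trunc n f + Polynomial.monomial n (coeff n f) :=
    fun n => trunc_succ f n
  have t0 : trunc 0 f = 0 := by ext m; rw [coeff_trunc]; simp
  have t2 : trunc 2 f = Polynomial.monomial 1 1 := by
    rw [show (2:ℕ) = 0+1+1 from rfl, ts, ts, t0, cf0, cf1]; simp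
  have t3 : trunc 3 f = Polynomial.monomial 1 1 := by
    rw [show (3:ℕ) = 2+1 from rfl, ts, t2, cf2]; simp
  have t4 : trunc 4 f = Polynomial.monomial 1 1 + Polynomial.monomial 3 1 := by
    rw [show (4:ℕ) = 3+1 from rfl, ts, t3, cf3]
  have t5 : trunc 5 f = Polynomial.monomial 1 1 + Polynomial.monomial 3 1 := by
    rw [show (5:ℕ) = 4+1 from rfl, ts, t4, cf4]; simp
  have t6 : trunc 6 f = Polynomial.monomial 1 1 + Polynomial.monomial 3 1
      + Polynomial.monomial 5 1 := by
    rw [show (6:ℕ) = 5+1 from rfl, ts, t5, cf5]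
  have t7 : trunc 7 f = Polynomial.monomial 1 1 + Polynomial.monomial 3 1
      + Polynomial.monomial 5 1 := by
    rw [show (7:ℕ) = 6+1 from rfl, ts, t6, cf6]; simp
  have t8 : trunc 8 f = Polynomial.monomial 1 1 + Polynomial.monomial 3 1
      + Polynomial.monomial 5 1 + Polynomial.monomial 7 1 := by
    rw [show (8:ℕ) = 7+1 from rfl, ts, t7, cf7]
  -- coefficient equations from hinv
  have heq : ∀ n : ℕ, coeff n (Polynomial.aeval u (trunc (n + 1) f))
      = coeff n (X : ℚ⟦X⟧) := by
    intro n
    rw [← hinv]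
    simp [PowerSeries.compose]
  have cm : ∀ (A B : ℚ⟦X⟧) (n : ℕ), coeff n (A * B)
      = ∑ i ∈ Finset.range (n + 1), coeff i A * coeff (n - i) B := by
    intro A B n
    rw [coeff_mul, Finset.Nat.sum_antidiagonal_eq_sum_range_succ_mk]
  have a0 : coeff 0 u = 0 := by rw [coeff_zero_eq_constantCoeff]; exact hu0
  have a1 : coeff 1 u = 1 := by
    have := heq 1
    rw [t2] at this
    simpa [Polynomial.aeval_monomial] using this
  have a2 : coeff 2 u = 0 := by
    have := heq 2
    rw [t3] at this
    simpa [Polynomial.aeval_monomial, coeff_X] using this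
  -- coefficients of u*u
  have b0 : coeff 0 (u*u) = 0 := by rw [cm]; simp [Finset.sum_range_succ, a0]
  have b1 : coeff 1 (u*u) = 0 := by rw [cm]; simp [Finset.sum_range_succ, a0, a1]
  have b2 : coeff 2 (u*u) = 1 := by rw [cm]; simp [Finset.sum_range_succ, a0, a1, a2]
  have b3 : coeff 3 (u*u) = 0 := by rw [cm]; simp [Finset.sum_range_succ, a0, a1, a2]
  -- n = 3 equation
  have a3 : coeff 3 u = -1 := by
    have h := heq 3
    rw [t4, map_add] at h
    simp only [Polynomial.aeval_monomial, map_one, one_mul, pow_one, map_add] at h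
    rw [show u ^ 3 = (u*u)*u by ring] at h
    rw [cm (u*u) u 3] at h
    simp [Finset.sum_range_succ, a0, a1, a2, b0, b1, b2, b3, coeff_X] at h
    linarith
  have b4 : coeff 4 (u*u) = -2 := by
    rw [cm]; simp [Finset.sum_range_succ, a0, a1, a2, a3]; ring
  have a4 : coeff 4 u = 0 := by
    have h := heq 4
    rw [t5, map_add] at h
    simp only [Polynomial.aeval_monomial, map_one, one_mul, pow_one, map_add] at h
    rw [show u ^ 3 = (u*u)*u by ring] at h
    rw [cm (u*u) u 4] at h
    simp [Finset.sum_range_succ, a0, a1, a2, a3, b0, b1, b2, b3, b4, coeff_X] at h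
    linarith
  have b5 : coeff 5 (u*u) = 0 := by
    rw [cm]; simp [Finset.sum_range_succ, a0, a1, a2, a3, a4]
  -- coefficients of u^3 = (u*u)*u
  have c0 : coeff 0 ((u*u)*u) = 0 := by rw [cm]; simp [Finset.sum_range_succ, a0]
  have c1 : coeff 1 ((u*u)*u) = 0 := by rw [cm]; simp [Finset.sum_range_succ, a0, b0, b1]
  have c2 : coeff 2 ((u*u)*u) = 0 := by rw [cm]; simp [Finset.sum_range_succ, a0, b0, b1, b2, a2]
  have c3 : coeff 3 ((u*u)*u) = 1 := by
    rw [cm]; simp [Finset.sum_range_succ, a0, a1, a2, b0, b1, b2]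
  have c4 : coeff 4 ((u*u)*u) = 0 := by
    rw [cm]; simp [Finset.sum_range_succ, a0, a1, a2, a3, b0, b1, b2, b3]
  have c5 : coeff 5 ((u*u)*u) = -3 := by
    rw [cm]; simp [Finset.sum_range_succ, a0, a1, a2, a3, a4, b0, b1, b2, b3, b4]; ring
  -- n = 5 equation, u^5 = ((u*u)*u)*(u*u)
  have a5 : coeff 5 u = 2 := by
    have h := heq 5
    rw [t6, map_add, map_add] at h
    simp only [Polynomial.aeval_monomial, map_one, one_mul, pow_one, map_add] at h
    rw [show u ^ 3 = (u*u)*u by ring, show u ^ 5 = ((u*u)*u)*(u*u) by ring] at h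
    rw [cm ((u*u)*u) (u*u) 5, cm (u*u) u 5] at h
    simp [Finset.sum_range_succ, a0, a1, a2, a3, a4, b0, b1, b2, b3, b4, b5,
      c0, c1, c2, c3, c4, coeff_X] at h
    linarith
  have b6 : coeff 6 (u*u) = 5 := by
    rw [cm]; simp [Finset.sum_range_succ, a0, a1, a2, a3, a4, a5]; ring
  have c6 : coeff 6 ((u*u)*u) = 0 := by
    rw [cm]; simp [Finset.sum_range_succ, a0, a1, a2, a3, a4, a5, b0, b1, b2, b3, b4, b5]
  -- coefficients of u^5
  have d0 : coeff 0 (((u*u)*u)*(u*u)) = 0 := by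
    rw [cm]; simp [Finset.sum_range_succ, c0, b0]
  have d1 : coeff 1 (((u*u)*u)*(u*u)) = 0 := by
    rw [cm]; simp [Finset.sum_range_succ, c0, c1, b0, b1]
  have d2 : coeff 2 (((u*u)*u)*(u*u)) = 0 := by
    rw [cm]; simp [Finset.sum_range_succ, c0, c1, c2, b0, b1, b2]
  have d3 : coeff 3 (((u*u)*u)*(u*u)) = 0 := by
    rw [cm]; simp [Finset.sum_range_succ, c0, c1, c2, c3, b0, b1, b2, b3]
  have d4 : coeff 4 (((u*u)*u)*(u*u)) = 0 := by
    rw [cm]; simp [Finset.sum_range_succ, c0, c1, c2, c3, c4, b0, b1, b2, b3, b4]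
  have d5 : coeff 5 (((u*u)*u)*(u*u)) = 1 := by
    rw [cm]; simp [Finset.sum_range_succ, c0, c1, c2, c3, c4, c5, b0, b1, b2, b3, b4, b5]
  -- n = 6 equation
  have a6 : coeff 6 u = 0 := by
    have h := heq 6
    rw [t7, map_add, map_add] at h
    simp only [Polynomial.aeval_monomial, map_one, one_mul, pow_one, map_add] at h
    rw [show u ^ 3 = (u*u)*u by ring, show u ^ 5 = ((u*u)*u)*(u*u) by ring] at h
    rw [cm ((u*u)*u) (u*u) 6, cm (u*u) u 6] at h
    simp [Finset.sum_range_succ, a0, a1, a2, a3, a4, a5, b0, b1, b2, b3, b4, b5, b6,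
      c0, c1, c2, c3, c4, c5, coeff_X] at h
    linarith
  have c7 : coeff 7 ((u*u)*u) = 9 := by
    rw [cm]; simp [Finset.sum_range_succ, a0, a1, a2, a3, a4, a5, a6,
      b0, b1, b2, b3, b4, b5, b6, hu0]; ring
  have d7 : coeff 7 (((u*u)*u)*(u*u)) = -5 := by
    rw [cm]; simp [Finset.sum_range_succ, c0, c1, c2, c3, c4, c5, c6,
      b0, b1, b2, b3, b4]; ring
  have e7 : coeff 7 ((((u*u)*u)*(u*u))*(u*u)) = 1 := by
    rw [cm]; simp [Finset.sum_range_succ, d0, d1, d2, d3, d4, d5, b0, b1, b2]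
  -- n = 7 equation
  have a7 : coeff 7 u = -5 := by
    have h := heq 7
    rw [t8, map_add, map_add, map_add] at h
    simp only [Polynomial.aeval_monomial, map_one, one_mul, pow_one, map_add] at h
    rw [show u ^ 3 = (u*u)*u by ring, show u ^ 5 = ((u*u)*u)*(u*u) by ring,
      show u ^ 7 = (((u*u)*u)*(u*u))*(u*u) by ring] at h
    rw [c7, d7, e7] at h
    simp [coeff_X] at h
    linarith
  rw [a7]
  norm_num
end
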